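/- Let α > 2, s > 0, D > 0 and P > 0. Then (1/P²) · ∫₀^∞ g·e^{−g/P} · ( 2·∫_D^∞ x·(1 − exp(−s g x^{−α})) dx ) dg = −D² + (2 s^{2/α}/(α P²)) · [ P^{2/α + 2} · (1 + 2/α) · π·csc(2π/α) + I₁(2/α + 2, 1/P, −2/α, s/D^α) ], where I₁(x, y, z, ν) := ∫₀^∞ t^{x−1} e^{−y t} Γ(z, ν t) dt and Γ(a,u) is the real upper incomplete gamma function. (This is the exponent of the Laplace transform of the network interference from full-duplex cells with equal access-point and user transmit powers.) -/

import Mathlib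

open MeasureTheory Real
open Set Filter Topology

/-- The real upper incomplete gamma function Γ(a,u) = ∫_u^∞ t^{a−1} e^{−t} dt. -/
noncomputable def uGamma (a u : ℝ) : ℝ := ∫ t in Set.Ioi u, t ^ (a - 1) * Real.exp (-t)

lemma uGamma_integrand_integrableOn (a : ℝ) {u : ℝ} (hu : 0 < u) :
    IntegrableOn (fun t : ℝ => t ^ (a - 1) * Real.exp (-t)) (Ioi u) := by
  rcases lt_or_ge 0 a with ha | ha
  · exact ((Real.GammaIntegral_convergent ha).mono_set (Ioi_subset_Ioi hu.le)).congr_fun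
      (fun t _ => mul_comm _ _) measurableSet_Ioi
  · have hg : IntegrableOn (fun t : ℝ => u ^ (a - 1) * Real.exp (-t)) (Ioi u) := by
      have := (exp_neg_integrableOn_Ioi u (zero_lt_one)).const_mul (u ^ (a - 1))
      simp at this; exact this
    refine Integrable.mono' hg ?_ ?_
    · refine (ContinuousOn.aestronglyMeasurable ?_ measurableSet_Ioi)
      intro t ht
      exact ((Real.continuousAt_rpow_const t (a - 1)
        (Or.inl (hu.trans ht).ne')).mul
        (Real.continuous_exp.continuousAt.comp (continuous_neg.continuousAt))).continuousWithinAt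
    · filter_upwards [ae_restrict_mem measurableSet_Ioi] with t ht
      have ht0 : 0 < t := hu.trans ht
      rw [Real.norm_eq_abs, abs_of_nonneg (by positivity)]
      exact mul_le_mul_of_nonneg_right
        (Real.rpow_le_rpow_of_nonpos hu (le_of_lt ht) (by linarith)) (Real.exp_nonneg _)

lemma uGamma_nonneg (a : ℝ) {u : ℝ} (hu : 0 ≤ u) : 0 ≤ uGamma a u := by
  refine setIntegral_nonneg measurableSet_Ioi (fun t ht => ?_)
  have : (0:ℝ) ≤ t := hu.trans (le_of_lt ht)
  positivity

lemma uGamma_mono {a u v : ℝ} (hu : 0 < u) (huv : u ≤ v) : uGamma a v ≤ uGamma a u := by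
  refine setIntegral_mono_set (uGamma_integrand_integrableOn a hu) ?_
    (HasSubset.Subset.eventuallyLE (Ioi_subset_Ioi huv))
  filter_upwards [ae_restrict_mem measurableSet_Ioi] with t ht
  have : (0:ℝ) ≤ t := hu.le.trans (le_of_lt ht)
  positivity

lemma uGamma_le_Gamma {a u : ℝ} (ha : 0 < a) (hu : 0 ≤ u) : uGamma a u ≤ Real.Gamma a := by
  have hΓ : Real.Gamma a = ∫ t in Ioi (0:ℝ), t ^ (a - 1) * Real.exp (-t) := by
    rw [Real.Gamma_eq_integral ha]
    exact setIntegral_congr_fun measurableSet_Ioi (fun t _ => mul_comm _ _)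
  rw [hΓ]
  refine setIntegral_mono_set ?_ ?_ (HasSubset.Subset.eventuallyLE (Ioi_subset_Ioi hu))
  · exact ((Real.GammaIntegral_convergent ha).congr_fun
      (fun t _ => mul_comm _ _) measurableSet_Ioi)
  · filter_upwards [ae_restrict_mem measurableSet_Ioi] with t ht
    have : (0:ℝ) ≤ t := le_of_lt ht
    positivity

lemma uGamma_neg_le {b u : ℝ} (hb : 0 < b) (hu : 0 < u) :
    uGamma (-b) u ≤ u ^ (-b) / b := by
  have h1 : uGamma (-b) u ≤ ∫ t in Ioi u, t ^ (-b - 1) := by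
    refine setIntegral_mono_on (uGamma_integrand_integrableOn _ hu)
      (integrableOn_Ioi_rpow_of_lt (by linarith) hu) measurableSet_Ioi (fun t ht => ?_)
    have ht0 : (0:ℝ) < t := hu.trans ht
    calc t ^ (-b - 1) * Real.exp (-t) ≤ t ^ (-b - 1) * 1 := by
          exact mul_le_mul_of_nonneg_left (Real.exp_le_one_iff.mpr (by linarith : -t ≤ 0))
            (by positivity)
      _ = t ^ (-b - 1) := mul_one _
  calc uGamma (-b) u ≤ ∫ t in Ioi u, t ^ (-b - 1) := h1
    _ = u ^ (-b) / b := by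
        rw [integral_Ioi_rpow_of_lt (by linarith) hu]
        rw [show -b - 1 + 1 = -b by ring]
        field_simp

lemma uGamma_add_one (a : ℝ) {u : ℝ} (hu : 0 < u) :
    uGamma (a + 1) u = a * uGamma a u + u ^ a * Real.exp (-u) := by
  have hderiv : ∀ x ∈ Ici u, HasDerivAt (fun t : ℝ => -(t ^ a * Real.exp (-t)))
      (x ^ a * Real.exp (-x) - a * (x ^ (a - 1) * Real.exp (-x))) x := by
    intro x hx
    have hx0 : (0:ℝ) < x := hu.trans_le hx
    have h1 : HasDerivAt (fun t : ℝ => t ^ a) (a * x ^ (a - 1)) x :=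
      Real.hasDerivAt_rpow_const (Or.inl hx0.ne')
    have h2 : HasDerivAt (fun t : ℝ => Real.exp (-t)) (Real.exp (-x) * (-1)) x :=
      (Real.hasDerivAt_exp (-x)).comp x ((hasDerivAt_id x).neg)
    have := (h1.mul h2).neg
    refine this.congr_deriv ?_
    ring
  have hint : IntegrableOn (fun x : ℝ =>
      x ^ a * Real.exp (-x) - a * (x ^ (a - 1) * Real.exp (-x))) (Ioi u) := by
    refine Integrable.sub ?_ ((uGamma_integrand_integrableOn a hu).const_mul a)
    have := uGamma_integrand_integrableOn (a + 1) hu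
    simp only [add_sub_cancel_right] at this; exact this
  have htend : Tendsto (fun t : ℝ => -(t ^ a * Real.exp (-t))) atTop (𝓝 0) := by
    have := (tendsto_rpow_mul_exp_neg_mul_atTop_nhds_zero a 1 one_pos).neg
    simp only [neg_zero] at this
    refine this.congr (fun x => ?_)
    simp [neg_mul, one_mul]
  have key := integral_Ioi_of_hasDerivAt_of_tendsto' hderiv hint htend
  have hsplit : ∫ x in Ioi u, (x ^ a * Real.exp (-x) - a * (x ^ (a - 1) * Real.exp (-x)))
      = uGamma (a + 1) u - a * uGamma a u := by
    rw [integral_sub (by have h := uGamma_integrand_integrableOn (a + 1) hu; simp only [add_sub_cancel_right] at h; exact h)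
      (((uGamma_integrand_integrableOn a hu).const_mul a))]
    rw [MeasureTheory.integral_const_mul]
    unfold uGamma
    simp
  rw [hsplit] at key
  have : uGamma (a+1) u - a * uGamma a u = 0 - -(u ^ a * Real.exp (-u)) := key
  linarith

lemma Gamma_sub_uGamma_le {a u : ℝ} (ha : 0 < a) (hu : 0 < u) :
    Real.Gamma a - uGamma a u ≤ u ^ a / a := by
  have hsplit : Real.Gamma a = (∫ t in Ioc (0:ℝ) u, t ^ (a - 1) * Real.exp (-t)) + uGamma a u := by
    rw [Real.Gamma_eq_integral ha]
    rw [show (∫ x in Ioi (0:ℝ), Real.exp (-x) * x ^ (a-1))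
        = ∫ t in Ioi (0:ℝ), t ^ (a - 1) * Real.exp (-t) from
      setIntegral_congr_fun measurableSet_Ioi (fun t _ => mul_comm _ _)]
    have hioc : IntegrableOn (fun t : ℝ => t ^ (a - 1) * Real.exp (-t)) (Ioc 0 u) :=
      ((Real.GammaIntegral_convergent ha).congr_fun (fun t _ => mul_comm _ _)
        measurableSet_Ioi).mono_set Ioc_subset_Ioi_self
    rw [← Ioc_union_Ioi_eq_Ioi hu.le, setIntegral_union (Ioc_disjoint_Ioi le_rfl)
      measurableSet_Ioi hioc (uGamma_integrand_integrableOn a hu)]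
    rfl
  have hbound : (∫ t in Ioc (0:ℝ) u, t ^ (a - 1) * Real.exp (-t)) ≤ u ^ a / a := by
    have h1 : (∫ t in Ioc (0:ℝ) u, t ^ (a - 1) * Real.exp (-t)) ≤ ∫ t in Ioc (0:ℝ) u, t ^ (a-1) := by
      refine setIntegral_mono_on (((Real.GammaIntegral_convergent ha).congr_fun
          (fun t _ => mul_comm _ _) measurableSet_Ioi).mono_set Ioc_subset_Ioi_self) ?_
        measurableSet_Ioc (fun t ht => ?_)
      · have := intervalIntegral.intervalIntegrable_rpow' (a := (0:ℝ)) (b := u)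
          (show (-1:ℝ) < a - 1 by linarith)
        rw [intervalIntegrable_iff_integrableOn_Ioc_of_le hu.le] at this
        exact this
      · have ht0 : 0 < t := ht.1
        calc t ^ (a - 1) * Real.exp (-t) ≤ t ^ (a - 1) * 1 :=
            mul_le_mul_of_nonneg_left (Real.exp_le_one_iff.mpr (by linarith : -t ≤ 0))
              (by positivity)
          _ = t ^ (a - 1) := mul_one _
    have h2 : (∫ t in Ioc (0:ℝ) u, t ^ (a-1)) = u ^ a / a := by
      rw [← intervalIntegral.integral_of_le hu.le]
      rw [integral_rpow (Or.inl (by linarith : (-1:ℝ) < a - 1))]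
      rw [Real.zero_rpow (by linarith : a - 1 + 1 ≠ 0)]
      rw [show a - 1 + 1 = a by ring]
      ring
    linarith
  linarith

lemma tendsto_uGamma_zero {a : ℝ} (ha : 0 < a) :
    Tendsto (fun u => uGamma a u) (𝓝[>] (0:ℝ)) (𝓝 (Real.Gamma a)) := by
  have hlow : Tendsto (fun u : ℝ => Real.Gamma a - u ^ a / a) (𝓝[>] (0:ℝ)) (𝓝 (Real.Gamma a)) := by
    have h1 : Tendsto (fun u : ℝ => u ^ a) (𝓝[>] (0:ℝ)) (𝓝 0) := by
      have h := (Real.continuousAt_rpow_const 0 a (Or.inr ha.le)).tendsto.mono_left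
        (nhdsWithin_le_nhds (s := Ioi (0:ℝ)))
      simpa [Real.zero_rpow ha.ne'] using h
    have := ((h1.div_const a).const_sub (Real.Gamma a))
    simpa using this
  refine tendsto_of_tendsto_of_tendsto_of_le_of_le' hlow tendsto_const_nhds ?_ ?_
  · filter_upwards [self_mem_nhdsWithin] with u hu
    have := Gamma_sub_uGamma_le ha (mem_Ioi.mp hu)
    linarith
  · filter_upwards [self_mem_nhdsWithin] with u hu
    exact uGamma_le_Gamma ha (le_of_lt (mem_Ioi.mp hu))

lemma uGamma_split {a v w : ℝ} (hv : 0 < v) (hvw : v ≤ w) :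
    uGamma a v = (∫ t in Ioc v w, t ^ (a - 1) * Real.exp (-t)) + uGamma a w := by
  have hw : 0 < w := hv.trans_le hvw
  unfold uGamma
  rw [← Ioc_union_Ioi_eq_Ioi hvw, setIntegral_union (Ioc_disjoint_Ioi le_rfl)
    measurableSet_Ioi ((uGamma_integrand_integrableOn a hv).mono_set Ioc_subset_Ioi_self)
    (uGamma_integrand_integrableOn a hw)]

lemma uGamma_eq_interval_add (a : ℝ) {b v : ℝ} (hb : 0 < b) (hv : 0 < v) :
    uGamma a v = (∫ t in v..b, t ^ (a - 1) * Real.exp (-t)) + uGamma a b := by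
  rcases le_total v b with h | h
  · rw [intervalIntegral.integral_of_le h, ← uGamma_split hv h]
  · rw [intervalIntegral.integral_symm, intervalIntegral.integral_of_le h]
    have := uGamma_split (a := a) hb h
    linarith [this]

lemma hasDerivAt_uGamma (a : ℝ) {u : ℝ} (hu : 0 < u) :
    HasDerivAt (uGamma a) (-(u ^ (a - 1) * Real.exp (-u))) u := by
  set f : ℝ → ℝ := fun t => t ^ (a - 1) * Real.exp (-t) with hf
  have hb : (0:ℝ) < u + 1 := by linarith
  have hii : IntervalIntegrable f volume u (u + 1) := by
    rw [intervalIntegrable_iff_integrableOn_Ioc_of_le (by linarith)]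
    exact (uGamma_integrand_integrableOn a hu).mono_set Ioc_subset_Ioi_self
  have hmeas : StronglyMeasurableAtFilter f (𝓝 u) := by
    refine ⟨Ioi 0, Ioi_mem_nhds hu, ?_⟩
    refine ContinuousOn.aestronglyMeasurable (fun t ht => ?_) measurableSet_Ioi
    exact ((Real.continuousAt_rpow_const t (a - 1) (Or.inl (ne_of_gt ht))).mul
      (Real.continuous_exp.continuousAt.comp continuous_neg.continuousAt)).continuousWithinAt
  have hcont : ContinuousAt f u :=
    (Real.continuousAt_rpow_const u (a - 1) (Or.inl hu.ne')).mul
      (Real.continuous_exp.continuousAt.comp continuous_neg.continuousAt)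
  have hD : HasDerivAt (fun v => (∫ t in v..(u+1), f t) + uGamma a (u + 1)) (-f u) u :=
    (intervalIntegral.integral_hasDerivAt_left hii hmeas hcont).add_const _
  refine hD.congr_of_eventuallyEq ?_
  filter_upwards [Ioi_mem_nhds hu] with v hv
  exact uGamma_eq_interval_add a hb (mem_Ioi.mp hv)

lemma inner_integral {α c D : ℝ} (hα : 2 < α) (hc : 0 < c) (hD : 0 < D) :
    ∫ x in Ioi D, x * (1 - Real.exp (-(c * x ^ (-α)))) =
      c ^ (2/α) / 2 * Real.Gamma (1 - 2/α) - D ^ 2 / 2 * (1 - Real.exp (-(c * D ^ (-α))))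
        - c ^ (2/α) / 2 * uGamma (1 - 2/α) (c * D ^ (-α)) := by
  have hα0 : (0:ℝ) < α := by linarith
  set β : ℝ := 2/α with hβdef
  have hβ0 : 0 < β := by positivity
  have hβ1 : β < 1 := by rw [hβdef, div_lt_one hα0]; linarith
  have hderiv : ∀ x ∈ Ici D, HasDerivAt
      (fun x : ℝ => x ^ 2 / 2 * (1 - Real.exp (-(c * x ^ (-α))))
        + c ^ β / 2 * uGamma (1 - β) (c * x ^ (-α)))
      (x * (1 - Real.exp (-(c * x ^ (-α))))) x := by
    intro x hx
    have hx0 : 0 < x := hD.trans_le hx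
    have hu : HasDerivAt (fun x : ℝ => c * x ^ (-α)) (c * (-α * x ^ (-α - 1))) x :=
      (Real.hasDerivAt_rpow_const (p := -α) (Or.inl hx0.ne')).const_mul c
    have hupos : 0 < c * x ^ (-α) := by positivity
    have hexp : HasDerivAt (fun x : ℝ => Real.exp (-(c * x ^ (-α))))
        (Real.exp (-(c * x ^ (-α))) * -(c * (-α * x ^ (-α - 1)))) x :=
      (Real.hasDerivAt_exp _).comp x hu.neg
    have h1 : HasDerivAt (fun x : ℝ => 1 - Real.exp (-(c * x ^ (-α))))
        (-(Real.exp (-(c * x ^ (-α))) * -(c * (-α * x ^ (-α - 1))))) x := hexp.const_sub 1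
    have hx2 : HasDerivAt (fun x : ℝ => x ^ 2 / 2) x x := by
      have := (hasDerivAt_pow 2 x).div_const 2
      refine this.congr_deriv ?_
      simp
    have hG : HasDerivAt (fun x : ℝ => uGamma (1 - β) (c * x ^ (-α)))
        (-((c * x ^ (-α)) ^ (1 - β - 1) * Real.exp (-(c * x ^ (-α))))
          * (c * (-α * x ^ (-α - 1)))) x :=
      HasDerivAt.comp (h₂ := uGamma (1 - β)) x (hasDerivAt_uGamma (1 - β) hupos) hu
    have hsum := (hx2.mul h1).add (hG.const_mul (c ^ β / 2))
    refine hsum.congr_deriv ?_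
    have hkey : (c * x ^ (-α)) ^ (1 - β - 1) = c ^ (-β) * x ^ (2:ℕ) := by
      rw [show (1 - β - 1) = -β by ring,
        Real.mul_rpow hc.le (Real.rpow_nonneg hx0.le _),
        ← Real.rpow_natCast x 2, ← Real.rpow_mul hx0.le]
      have h2 : -α * -β = 2 := by rw [hβdef]; field_simp
      rw [h2]
      norm_num
    rw [hkey, Real.rpow_neg hc.le]
    have hcb : c ^ β ≠ 0 := by positivity
    field_simp
    ring
  have hnn : ∀ x : ℝ, 0 < x → 0 ≤ 1 - Real.exp (-(c * x ^ (-α))) := by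
    intro x hx0
    have h1 : Real.exp (-(c * x ^ (-α))) ≤ 1 :=
      Real.exp_le_one_iff.mpr (neg_nonpos.mpr (by positivity))
    linarith
  have hle : ∀ x : ℝ, 0 < x → 1 - Real.exp (-(c * x ^ (-α))) ≤ c * x ^ (-α) := by
    intro x hx0
    linarith [Real.add_one_le_exp (-(c * x ^ (-α)))]
  have hint : IntegrableOn (fun x : ℝ => x * (1 - Real.exp (-(c * x ^ (-α))))) (Ioi D) := by
    have hg : IntegrableOn (fun x : ℝ => c * x ^ (1 - α)) (Ioi D) :=
      (integrableOn_Ioi_rpow_of_lt (by linarith) hD).const_mul c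
    refine Integrable.mono' hg ?_ ?_
    · refine ContinuousOn.aestronglyMeasurable (fun x hx => ?_) measurableSet_Ioi
      have hx0 : 0 < x := hD.trans hx
      have h1 : ContinuousAt (fun x : ℝ => x ^ (-α)) x :=
        Real.continuousAt_rpow_const x (-α) (Or.inl hx0.ne')
      have h2 : ContinuousAt (fun x : ℝ => Real.exp (-(c * x ^ (-α)))) x :=
        Real.continuous_exp.continuousAt.comp ((h1.const_mul c).neg)
      exact (continuousAt_id.mul (continuousAt_const.sub h2)).continuousWithinAt
    · filter_upwards [ae_restrict_mem measurableSet_Ioi] with x hx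
      have hx0 : 0 < x := hD.trans hx
      have hxx : x * (c * x ^ (-α)) = c * x ^ (1 - α) := by
        rw [show (1 - α) = 1 + (-α) by ring, Real.rpow_add hx0, Real.rpow_one]
        ring
      rw [Real.norm_eq_abs, abs_of_nonneg (mul_nonneg hx0.le (hnn x hx0))]
      calc x * (1 - Real.exp (-(c * x ^ (-α)))) ≤ x * (c * x ^ (-α)) :=
            mul_le_mul_of_nonneg_left (hle x hx0) hx0.le
        _ = c * x ^ (1 - α) := hxx
  have hcomp : Tendsto (fun x : ℝ => c * x ^ (-α)) atTop (𝓝[>] (0:ℝ)) := by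
    refine tendsto_nhdsWithin_of_tendsto_nhds_of_eventually_within _ ?_ ?_
    · have := (tendsto_rpow_neg_atTop hα0).const_mul c
      simpa using this
    · filter_upwards [eventually_gt_atTop (0:ℝ)] with x hx
      have : 0 < c * x ^ (-α) := by positivity
      exact this
  have htend : Tendsto (fun x : ℝ => x ^ 2 / 2 * (1 - Real.exp (-(c * x ^ (-α))))
      + c ^ β / 2 * uGamma (1 - β) (c * x ^ (-α))) atTop
      (𝓝 (0 + c ^ β / 2 * Real.Gamma (1 - β))) := by
    have hT1 : Tendsto (fun x : ℝ => x ^ 2 / 2 * (1 - Real.exp (-(c * x ^ (-α))))) atTop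
        (𝓝 0) := by
      have hupper : Tendsto (fun x : ℝ => c / 2 * x ^ (2 - α)) atTop (𝓝 0) := by
        have := (tendsto_rpow_neg_atTop (show (0:ℝ) < α - 2 by linarith)).const_mul (c/2)
        rw [mul_zero] at this
        refine this.congr (fun x => ?_)
        rw [show -(α - 2) = 2 - α by ring]
      refine tendsto_of_tendsto_of_tendsto_of_le_of_le' tendsto_const_nhds hupper ?_ ?_
      · filter_upwards [eventually_gt_atTop (0:ℝ)] with x hx
        exact mul_nonneg (by positivity) (hnn x hx)
      · filter_upwards [eventually_gt_atTop (0:ℝ)] with x hx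
        have hxx : x ^ 2 / 2 * (c * x ^ (-α)) = c / 2 * x ^ (2 - α) := by
          rw [show (2 - α) = 2 + (-α) by ring, Real.rpow_add hx,
            show x ^ (2:ℝ) = x ^ (2:ℕ) by rw [← Real.rpow_natCast x 2]; norm_num]
          ring
        calc x ^ 2 / 2 * (1 - Real.exp (-(c * x ^ (-α)))) ≤ x ^ 2 / 2 * (c * x ^ (-α)) :=
              mul_le_mul_of_nonneg_left (hle x hx) (by positivity)
          _ = c / 2 * x ^ (2 - α) := hxx
    have hT2 : Tendsto (fun x : ℝ => c ^ β / 2 * uGamma (1 - β) (c * x ^ (-α))) atTop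
        (𝓝 (c ^ β / 2 * Real.Gamma (1 - β))) :=
      ((tendsto_uGamma_zero (show (0:ℝ) < 1 - β by linarith)).comp hcomp).const_mul _
    exact hT1.add hT2
  have key := integral_Ioi_of_hasDerivAt_of_tendsto' hderiv hint htend
  rw [key]
  ring

lemma integrableOn_rpow_mul_exp_neg_mul {p r : ℝ} (hp : 0 < p) (hr : 0 < r) :
    IntegrableOn (fun t : ℝ => t ^ (p - 1) * Real.exp (-(r * t))) (Ioi 0) := by
  have h0 := Real.GammaIntegral_convergent hp
  have h1 : IntegrableOn (fun x : ℝ => Real.exp (-(r * x)) * (r * x) ^ (p - 1)) (Ioi 0) := by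
    have := (integrableOn_Ioi_comp_mul_left_iff
      (fun x : ℝ => Real.exp (-x) * x ^ (p - 1)) 0 hr).2 (by simpa using h0)
    simpa using this
  have h2 := h1.const_mul (r ^ (1 - p))
  refine IntegrableOn.congr_fun h2 (fun t ht => ?_) measurableSet_Ioi
  have ht0 : (0:ℝ) < t := ht
  rw [Real.mul_rpow hr.le ht0.le]
  have hrr : r ^ (1 - p) * r ^ (p - 1) = 1 := by
    rw [← Real.rpow_add hr]; norm_num
  calc r ^ (1 - p) * (Real.exp (-(r * t)) * (r ^ (p - 1) * t ^ (p - 1)))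
      = (r ^ (1 - p) * r ^ (p - 1)) * (t ^ (p - 1) * Real.exp (-(r * t))) := by ring
    _ = t ^ (p - 1) * Real.exp (-(r * t)) := by rw [hrr, one_mul]

lemma aemeasurable_uGamma_comp (a ν : ℝ) (hν : 0 < ν) :
    AEMeasurable (fun g : ℝ => uGamma a (ν * g)) (volume.restrict (Ioi 0)) := by
  refine aemeasurable_restrict_of_antitoneOn measurableSet_Ioi ?_
  intro u hu v hv huv
  exact uGamma_mono (mul_pos hν (mem_Ioi.mp hu)) (mul_le_mul_of_nonneg_left huv hν.le)

lemma final_algebra (A G S Q I K N piv D2 P2 a : ℝ) (hS : S ≠ 0) (hG : G ≠ 0)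
    (hP2 : P2 ≠ 0) (ha : a ≠ 0) (h : A * N = D2) :
    1/P2 * (A*(piv/(S*G))*(Q*((2/a+1)*(2/a*G)))
      + (-D2*(P2*1) + (D2*(K*1) + -A*(-(2/a)*I + N*(K*1)))))
    = -D2 + 2*A/(a*P2)*(Q*(1+2/a)*piv*S⁻¹ + I) := by
  field_simp
  linear_combination (-a^2*S*K) * h

/-- I₁(x,y,z,ν) = ∫₀^∞ t^{x−1} e^{−yt} Γ(z, νt) dt. -/
noncomputable def I1 (x y z ν : ℝ) : ℝ :=
  ∫ t in Set.Ioi (0 : ℝ), t ^ (x - 1) * Real.exp (-(y * t)) * uGamma z (ν * t)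

set_option maxHeartbeats 1000000 in
/-- Laplace-transform exponent of the FD-cell interference, equal powers. -/
theorem laplace_exponent_FD_equal_powers (α s D P : ℝ) (hα : 2 < α) (hs : 0 < s)
    (hD : 0 < D) (hP : 0 < P) :
    (1 / P ^ 2) * ∫ g in Set.Ioi (0 : ℝ),
        g * Real.exp (-(g / P)) *
        (2 * ∫ x in Set.Ioi D, x * (1 - Real.exp (-(s * g * x ^ (-α)))))
      = -D ^ 2 + (2 * s ^ (2 / α) / (α * P ^ 2)) *
        (P ^ (2 / α + 2) * (1 + 2 / α) * Real.pi * (Real.sin (2 * Real.pi / α))⁻¹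
          + I1 (2 / α + 2) (1 / P) (-(2 / α)) (s / D ^ α)) := by
  have hα0 : (0:ℝ) < α := by linarith
  have hDα : (0:ℝ) < D ^ α := Real.rpow_pos_of_pos hD α
  set β : ℝ := 2/α with hβdef
  have hβ0 : 0 < β := by positivity
  have hβ1 : β < 1 := by rw [hβdef, div_lt_one hα0]; linarith
  set ν : ℝ := s / D ^ α with hνdef
  have hν : 0 < ν := by rw [hνdef]; positivity
  have hP1 : (0:ℝ) < 1/P := by positivity
  have hPν : (0:ℝ) < 1/P + ν := by positivity
  -- pointwise identity for the outer integrand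
  have hpoint : ∀ g ∈ Ioi (0:ℝ),
      g * Real.exp (-(g / P)) *
        (2 * ∫ x in Set.Ioi D, x * (1 - Real.exp (-(s * g * x ^ (-α)))))
      = (s ^ β * Real.Gamma (1-β)) * (g ^ (β + 2 - 1) * Real.exp (-((1/P) * g)))
        + ((-(D^2)) * (g ^ ((2:ℝ) - 1) * Real.exp (-((1/P) * g)))
        + ((D^2) * (g ^ ((2:ℝ) - 1) * Real.exp (-((1/P + ν) * g)))
        + (-(s ^ β)) * (g ^ (β + 2 - 1) * Real.exp (-((1/P) * g)) * uGamma (1-β) (ν * g)))) := by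
    intro g hg
    have hg0 : (0:ℝ) < g := hg
    rw [inner_integral hα (mul_pos hs hg0) hD, ← hβdef]
    have h1 : s * g * D ^ (-α) = ν * g := by
      rw [Real.rpow_neg hD.le, hνdef]; ring
    rw [h1]
    rw [Real.mul_rpow hs.le hg0.le]
    have h3 : g ^ (β + 2 - 1) = g * g ^ β := by
      rw [show β + 2 - 1 = 1 + β by ring, Real.rpow_add hg0, Real.rpow_one]
    have h4 : g ^ ((2:ℝ) - 1) = g := by norm_num
    have h5 : Real.exp (-((1/P) * g)) = Real.exp (-(g / P)) := by
      congr 1; ring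
    have h6 : Real.exp (-((1/P + ν) * g)) = Real.exp (-(g / P)) * Real.exp (-(ν * g)) := by
      rw [← Real.exp_add]; congr 1; ring
    rw [h3, h4, h5, h6]
    ring
  -- integrabilities
  have hi1 : IntegrableOn (fun g : ℝ => g ^ (β + 2 - 1) * Real.exp (-((1/P) * g))) (Ioi 0) := by
    have := integrableOn_rpow_mul_exp_neg_mul (p := β + 2) (by linarith) hP1
    simpa using this
  have hi2 : IntegrableOn (fun g : ℝ => g ^ ((2:ℝ) - 1) * Real.exp (-((1/P) * g))) (Ioi 0) :=
    integrableOn_rpow_mul_exp_neg_mul (by norm_num) hP1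
  have hi3 : IntegrableOn (fun g : ℝ => g ^ ((2:ℝ) - 1) * Real.exp (-((1/P + ν) * g))) (Ioi 0) :=
    integrableOn_rpow_mul_exp_neg_mul (by norm_num) hPν
  have hbase1meas : AEMeasurable (fun g : ℝ => g ^ (β + 2 - 1) * Real.exp (-((1/P) * g)))
      (volume.restrict (Ioi 0)) := by
    refine ContinuousOn.aemeasurable (fun g hg => ?_) measurableSet_Ioi
    have hg0 : (0:ℝ) < g := hg
    have h1 : ContinuousAt (fun g : ℝ => g ^ (β + 2 - 1)) g :=
      Real.continuousAt_rpow_const g _ (Or.inl hg0.ne')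
    have h2 : ContinuousAt (fun g : ℝ => Real.exp (-((1/P) * g))) g :=
      Real.continuous_exp.continuousAt.comp ((continuousAt_const.mul continuousAt_id).neg)
    exact (h1.mul h2).continuousWithinAt
  have hi4 : IntegrableOn (fun g : ℝ =>
      g ^ (β + 2 - 1) * Real.exp (-((1/P) * g)) * uGamma (1-β) (ν * g)) (Ioi 0) := by
    refine Integrable.mono' (hi1.const_mul (Real.Gamma (1-β))) ?_ ?_
    · exact (hbase1meas.mul (aemeasurable_uGamma_comp _ ν hν)).aestronglyMeasurable
    · filter_upwards [ae_restrict_mem measurableSet_Ioi] with g hg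
      have hg0 : (0:ℝ) < g := hg
      have hu0 : (0:ℝ) ≤ ν * g := by positivity
      have h1 : (0:ℝ) ≤ uGamma (1-β) (ν*g) := uGamma_nonneg _ hu0
      have h2 : uGamma (1-β) (ν*g) ≤ Real.Gamma (1-β) := uGamma_le_Gamma (by linarith) hu0
      rw [Real.norm_eq_abs, abs_of_nonneg (by positivity)]
      calc g ^ (β + 2 - 1) * Real.exp (-((1/P) * g)) * uGamma (1-β) (ν*g)
          ≤ g ^ (β + 2 - 1) * Real.exp (-((1/P) * g)) * Real.Gamma (1-β) := by
            exact mul_le_mul_of_nonneg_left h2 (by positivity)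
        _ = Real.Gamma (1-β) * (g ^ (β + 2 - 1) * Real.exp (-((1/P) * g))) := by ring
  have hi5 : IntegrableOn (fun g : ℝ =>
      g ^ (β + 2 - 1) * Real.exp (-((1/P) * g)) * uGamma (-β) (ν * g)) (Ioi 0) := by
    refine Integrable.mono' (hi2.const_mul (ν ^ (-β) / β)) ?_ ?_
    · exact (hbase1meas.mul (aemeasurable_uGamma_comp _ ν hν)).aestronglyMeasurable
    · filter_upwards [ae_restrict_mem measurableSet_Ioi] with g hg
      have hg0 : (0:ℝ) < g := hg
      have hu0 : (0:ℝ) < ν * g := by positivity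
      have h1 : (0:ℝ) ≤ uGamma (-β) (ν*g) := uGamma_nonneg _ hu0.le
      have h2 : uGamma (-β) (ν*g) ≤ (ν*g) ^ (-β) / β := uGamma_neg_le hβ0 hu0
      rw [Real.norm_eq_abs, abs_of_nonneg (by positivity)]
      have hkey : g ^ (β + 2 - 1) * (ν*g) ^ (-β) / β
          = ν ^ (-β) / β * (g ^ ((2:ℝ) - 1) * 1) := by
        rw [Real.mul_rpow hν.le hg0.le,
          show β + 2 - 1 = 1 + β by ring, Real.rpow_add hg0, Real.rpow_one,
          show (2:ℝ) - 1 = 1 by norm_num, Real.rpow_one,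
          show -β = 0 - β by ring, Real.rpow_sub hg0, Real.rpow_zero]
        field_simp
      calc g ^ (β + 2 - 1) * Real.exp (-((1/P) * g)) * uGamma (-β) (ν*g)
          ≤ g ^ (β + 2 - 1) * Real.exp (-((1/P) * g)) * ((ν*g) ^ (-β) / β) :=
            mul_le_mul_of_nonneg_left h2 (by positivity)
        _ = (g ^ (β + 2 - 1) * (ν*g) ^ (-β) / β) * Real.exp (-((1/P) * g)) := by ring
        _ = (ν ^ (-β) / β * (g ^ ((2:ℝ) - 1) * 1)) * Real.exp (-((1/P) * g)) := by rw [hkey]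
        _ = ν ^ (-β) / β * (g ^ ((2:ℝ) - 1) * Real.exp (-((1/P) * g))) := by ring
  -- rewrite the outer integral using the pointwise identity
  rw [setIntegral_congr_fun measurableSet_Ioi hpoint]
  have e1 : IntegrableOn (fun g : ℝ => (s ^ β * Real.Gamma (1-β))
      * (g ^ (β + 2 - 1) * Real.exp (-((1/P) * g)))) (Ioi 0) := hi1.const_mul _
  have e2 : IntegrableOn (fun g : ℝ => (-(D^2))
      * (g ^ ((2:ℝ) - 1) * Real.exp (-((1/P) * g)))) (Ioi 0) := hi2.const_mul _
  have e3 : IntegrableOn (fun g : ℝ => (D^2)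
      * (g ^ ((2:ℝ) - 1) * Real.exp (-((1/P + ν) * g)))) (Ioi 0) := hi3.const_mul _
  have e4 : IntegrableOn (fun g : ℝ => (-(s ^ β))
      * (g ^ (β + 2 - 1) * Real.exp (-((1/P) * g)) * uGamma (1-β) (ν * g))) (Ioi 0) :=
    hi4.const_mul _
  have e34 : IntegrableOn (fun g : ℝ => (D^2)
      * (g ^ ((2:ℝ) - 1) * Real.exp (-((1/P + ν) * g)))
      + (-(s ^ β)) * (g ^ (β + 2 - 1) * Real.exp (-((1/P) * g)) * uGamma (1-β) (ν * g)))
      (Ioi 0) := e3.add e4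
  have e234 : IntegrableOn (fun g : ℝ => (-(D^2))
      * (g ^ ((2:ℝ) - 1) * Real.exp (-((1/P) * g)))
      + ((D^2) * (g ^ ((2:ℝ) - 1) * Real.exp (-((1/P + ν) * g)))
      + (-(s ^ β)) * (g ^ (β + 2 - 1) * Real.exp (-((1/P) * g)) * uGamma (1-β) (ν * g))))
      (Ioi 0) := e2.add e34
  rw [integral_add e1 e234, integral_add e2 e34, integral_add e3 e4,
      integral_const_mul, integral_const_mul, integral_const_mul, integral_const_mul]
  -- compute the elementary integrals
  rw [Real.integral_rpow_mul_exp_neg_mul_Ioi (show (0:ℝ) < β + 2 by linarith) hP1,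
      Real.integral_rpow_mul_exp_neg_mul_Ioi (show (0:ℝ) < 2 by norm_num) hP1,
      Real.integral_rpow_mul_exp_neg_mul_Ioi (show (0:ℝ) < 2 by norm_num) hPν]
  -- the incomplete-gamma integral, via the recurrence
  have hI1p : (∫ g in Ioi (0:ℝ), g ^ (β + 2 - 1) * Real.exp (-((1/P) * g))
        * uGamma (1-β) (ν * g))
      = -β * I1 (β+2) (1/P) (-β) ν
        + ν ^ (-β) * ((1/(1/P + ν)) ^ (2:ℝ) * Real.Gamma 2) := by
    have hpt : ∀ g ∈ Ioi (0:ℝ), g ^ (β + 2 - 1) * Real.exp (-((1/P) * g))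
          * uGamma (1-β) (ν * g)
        = (-β) * (g ^ (β + 2 - 1) * Real.exp (-((1/P) * g)) * uGamma (-β) (ν * g))
          + ν ^ (-β) * (g ^ ((2:ℝ) - 1) * Real.exp (-((1/P + ν) * g))) := by
      intro g hg
      have hg0 : (0:ℝ) < g := hg
      have hrec := uGamma_add_one (-β) (mul_pos hν hg0)
      rw [show (1:ℝ) - β = -β + 1 by ring, hrec]
      have hkey : g ^ (β + 2 - 1) * (ν * g) ^ (-β) = ν ^ (-β) * g ^ ((2:ℝ) - 1) := by
        rw [Real.mul_rpow hν.le hg0.le,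
          show β + 2 - 1 = 1 + β by ring, Real.rpow_add hg0, Real.rpow_one,
          show (2:ℝ) - 1 = 1 by norm_num, Real.rpow_one,
          show -β = 0 - β by ring, Real.rpow_sub hg0, Real.rpow_zero]
        field_simp
      have hexp : Real.exp (-((1/P + ν) * g))
          = Real.exp (-((1/P) * g)) * Real.exp (-(ν * g)) := by
        rw [← Real.exp_add]; congr 1; ring
      rw [hexp]
      calc g ^ (β + 2 - 1) * Real.exp (-((1/P) * g))
            * (-β * uGamma (-β) (ν*g) + (ν*g) ^ (-β) * Real.exp (-(ν*g)))
          = (-β) * (g ^ (β + 2 - 1) * Real.exp (-((1/P) * g)) * uGamma (-β) (ν * g))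
            + (g ^ (β + 2 - 1) * (ν*g) ^ (-β))
              * (Real.exp (-((1/P) * g)) * Real.exp (-(ν*g))) := by ring
        _ = _ := by rw [hkey]; ring
    have e5 : IntegrableOn (fun g : ℝ => (-β)
        * (g ^ (β + 2 - 1) * Real.exp (-((1/P) * g)) * uGamma (-β) (ν * g))) (Ioi 0) :=
      hi5.const_mul _
    have e6 : IntegrableOn (fun g : ℝ => ν ^ (-β)
        * (g ^ ((2:ℝ) - 1) * Real.exp (-((1/P + ν) * g)))) (Ioi 0) := hi3.const_mul _
    rw [setIntegral_congr_fun measurableSet_Ioi hpt,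
        integral_add e5 e6,
        integral_const_mul, integral_const_mul,
        Real.integral_rpow_mul_exp_neg_mul_Ioi (show (0:ℝ) < 2 by norm_num) hPν]
    rfl
  rw [hI1p]
  -- remaining algebra
  have hsν : s / ν = D ^ α := by rw [hνdef]; field_simp
  have hνβ : s ^ β * ν ^ (-β) = D ^ 2 := by
    rw [Real.rpow_neg hν.le,
      show s ^ β * (ν ^ β)⁻¹ = (s / ν) ^ β from by
        rw [Real.div_rpow hs.le hν.le]; ring,
      hsν, ← Real.rpow_mul hD.le,
      show α * β = 2 from by rw [hβdef]; field_simp,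
      show (2:ℝ) = ((2:ℕ):ℝ) from by norm_num, Real.rpow_natCast]
  have hΓ2 : Real.Gamma (β + 2) = (β + 1) * (β * Real.Gamma β) := by
    rw [show β + 2 = (β + 1) + 1 by ring,
      Real.Gamma_add_one (by positivity : (0:ℝ) < β + 1).ne',
      Real.Gamma_add_one hβ0.ne']
  have hsin : Real.sin (2 * Real.pi / α) = Real.sin (Real.pi * β) := by
    rw [hβdef]; congr 1; ring
  have hsinpos : 0 < Real.sin (Real.pi * β) :=
    Real.sin_pos_of_pos_of_lt_pi (by positivity)
      (by nlinarith [Real.pi_pos])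
  have hΓβpos : 0 < Real.Gamma β := Real.Gamma_pos_of_pos hβ0
  have hG1 : Real.Gamma (1 - β) = Real.pi / (Real.sin (Real.pi * β) * Real.Gamma β) := by
    have hrefl := Real.Gamma_mul_Gamma_one_sub β
    rw [eq_div_iff hsinpos.ne'] at hrefl
    rw [eq_div_iff (mul_pos hsinpos hΓβpos).ne']; linear_combination hrefl
  rw [one_div_one_div, Real.Gamma_two, hsin, hΓ2, hG1,
    show P ^ (2:ℝ) = P ^ 2 from by
      rw [show (2:ℝ) = ((2:ℕ):ℝ) from by norm_num, Real.rpow_natCast]]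
  -- eliminate the cancelling pair using hνβ, then finish with field_simp/ring
  rw [hβdef] at hνβ hsinpos hΓβpos ⊢
  exact final_algebra _ _ _ _ _ _ _ _ _ _ _ hsinpos.ne' hΓβpos.ne'
    (by positivity) hα0.ne' hνβ
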